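/- Conversely, every coprime symmetric pair (M N) of 2×2 integer matrices can be completed to a matrix [[A,B],[M,N]] ∈ Sp₄(ℤ) for suitable integer matrices A, B. -/

import Mathlib

open Matrix

/-- The standard symplectic form matrix `J = [[0,I₂],[-I₂,0]]`. -/
def Jmat : Matrix (Fin 2 ⊕ Fin 2) (Fin 2 ⊕ Fin 2) ℤ :=
  Matrix.fromBlocks 0 1 (-1) 0

/-- `γ ∈ Sp₄(ℤ)`. -/
def IsSp4 (γ : Matrix (Fin 2 ⊕ Fin 2) (Fin 2 ⊕ Fin 2) ℤ) : Prop :=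
  γᵀ * Jmat * γ = Jmat

/-- The 2×4 matrix `(M N)` reduced mod `p`. -/
def concatMod (p : ℕ) (M N : Matrix (Fin 2) (Fin 2) ℤ) :
    Matrix (Fin 2) (Fin 2 ⊕ Fin 2) (ZMod p) :=
  Matrix.of fun i => Sum.elim (fun j => ((M i j : ℤ) : ZMod p))
    (fun j => ((N i j : ℤ) : ZMod p))

/-- A `2 × n` matrix over a field whose `2×2` minors all vanish has rank at most 1. -/
lemma aux_rank_le_one {K : Type*} [Field K] {n : Type*} [Fintype n]
    (A : Matrix (Fin 2) n K)
    (h : ∀ s t, A 0 s * A 1 t = A 1 s * A 0 t) : A.rank ≤ 1 := by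
  classical
  obtain ⟨w, hw⟩ : ∃ w : Fin 2 → K, ∀ t, Aᵀ t ∈ Submodule.span K {w} := by
    by_cases h0 : ∀ t, A 0 t = 0
    · refine ⟨![0, 1], fun t => Submodule.mem_span_singleton.2 ⟨A 1 t, ?_⟩⟩
      funext i
      fin_cases i <;> simp [h0 t, Matrix.transpose_apply]
    · push_neg at h0
      obtain ⟨s, hs⟩ := h0
      refine ⟨Aᵀ s, fun t => Submodule.mem_span_singleton.2 ⟨A 0 t / A 0 s, ?_⟩⟩
      funext i
      fin_cases i
      · simp [Matrix.transpose_apply, div_mul_cancel₀ _ hs]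
      · show A 0 t / A 0 s * A 1 s = A 1 t
        field_simp
        linear_combination -h s t
  rw [rank_eq_finrank_span_cols]
  have hle : Submodule.span K (Set.range Aᵀ) ≤ Submodule.span K {w} :=
    Submodule.span_le.2 (by rintro x ⟨t, rfl⟩; exact hw t)
  calc Module.finrank K (Submodule.span K (Set.range Aᵀ))
      ≤ Module.finrank K (Submodule.span K ({w} : Set (Fin 2 → K))) := Submodule.finrank_mono hle
    _ ≤ 1 := le_trans (finrank_span_le_card _) (by simp)

/-- From the coprimality (rank mod every prime) hypothesis, the six `2×2` minors of `(M N)`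
admit a Bézout combination equal to `1`. -/
lemma aux_bezout (M N : Matrix (Fin 2) (Fin 2) ℤ)
    (hcop : ∀ p : ℕ, p.Prime → (concatMod p M N).rank = 2) :
    ∃ cM cN e00 e01 e10 e11 : ℤ,
      cM * (M 0 0 * M 1 1 - M 0 1 * M 1 0) + cN * (N 0 0 * N 1 1 - N 0 1 * N 1 0)
      + e00 * (M 0 0 * N 1 0 - M 1 0 * N 0 0) + e01 * (M 0 0 * N 1 1 - M 1 0 * N 0 1)
      + e10 * (M 0 1 * N 1 0 - M 1 1 * N 0 0) + e11 * (M 0 1 * N 1 1 - M 1 1 * N 0 1) = 1 := by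
  set dM : ℤ := M 0 0 * M 1 1 - M 0 1 * M 1 0 with hdM
  set dN : ℤ := N 0 0 * N 1 1 - N 0 1 * N 1 0 with hdN
  set d00 : ℤ := M 0 0 * N 1 0 - M 1 0 * N 0 0 with hd00
  set d01 : ℤ := M 0 0 * N 1 1 - M 1 0 * N 0 1 with hd01
  set d10 : ℤ := M 0 1 * N 1 0 - M 1 1 * N 0 0 with hd10
  set d11 : ℤ := M 0 1 * N 1 1 - M 1 1 * N 0 1 with hd11
  clear_value dM dN d00 d01 d10 d11
  have key : ∀ p : ℕ, p.Prime →
      ¬ ((p:ℤ) ∣ dM ∧ (p:ℤ) ∣ dN ∧ (p:ℤ) ∣ d00 ∧ (p:ℤ) ∣ d01 ∧ (p:ℤ) ∣ d10 ∧ (p:ℤ) ∣ d11) := by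
    rintro p hp ⟨h1, h2, h3, h4, h5, h6⟩
    haveI : Fact p.Prime := ⟨hp⟩
    have z1 : ((dM : ℤ) : ZMod p) = 0 := (ZMod.intCast_zmod_eq_zero_iff_dvd _ p).2 h1
    have z2 : ((dN : ℤ) : ZMod p) = 0 := (ZMod.intCast_zmod_eq_zero_iff_dvd _ p).2 h2
    have z3 : ((d00 : ℤ) : ZMod p) = 0 := (ZMod.intCast_zmod_eq_zero_iff_dvd _ p).2 h3
    have z4 : ((d01 : ℤ) : ZMod p) = 0 := (ZMod.intCast_zmod_eq_zero_iff_dvd _ p).2 h4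
    have z5 : ((d10 : ℤ) : ZMod p) = 0 := (ZMod.intCast_zmod_eq_zero_iff_dvd _ p).2 h5
    have z6 : ((d11 : ℤ) : ZMod p) = 0 := (ZMod.intCast_zmod_eq_zero_iff_dvd _ p).2 h6
    rw [hdM] at z1; rw [hdN] at z2; rw [hd00] at z3; rw [hd01] at z4
    rw [hd10] at z5; rw [hd11] at z6
    push_cast at z1 z2 z3 z4 z5 z6
    have hmin : ∀ s t, (concatMod p M N) 0 s * (concatMod p M N) 1 t
        = (concatMod p M N) 1 s * (concatMod p M N) 0 t := by
      rintro (s | s) (t | t) <;> fin_cases s <;> fin_cases t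
      all_goals
        simp only [concatMod, Matrix.of_apply, Sum.elim_inl, Sum.elim_inr, Fin.mk_zero,
          Fin.mk_one, Fin.isValue]
      all_goals
        first
          | ring1
          | linear_combination z1
          | linear_combination -z1
          | linear_combination z2
          | linear_combination -z2
          | linear_combination z3
          | linear_combination -z3
          | linear_combination z4
          | linear_combination -z4
          | linear_combination z5
          | linear_combination -z5
          | linear_combination z6
          | linear_combination -z6
    have := aux_rank_le_one (concatMod p M N) hmin
    rw [hcop p hp] at this
    omega
  set g5 : ℕ := Int.gcd d10 d11 with hg5
  set g4 : ℕ := Int.gcd d01 (g5 : ℤ) with hg4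
  set g3 : ℕ := Int.gcd d00 (g4 : ℤ) with hg3
  set g2 : ℕ := Int.gcd dN (g3 : ℤ) with hg2
  set g1 : ℕ := Int.gcd dM (g2 : ℤ) with hg1
  have hgone : g1 = 1 := by
    by_contra hne
    obtain ⟨p, hp, hpd⟩ := Nat.exists_prime_and_dvd hne
    refine key p hp ⟨?_, ?_, ?_, ?_, ?_, ?_⟩
    · exact dvd_trans (Int.natCast_dvd_natCast.2 hpd) ((Int.gcd_dvd_left _ _))
    all_goals {
      have hp2 : (p:ℤ) ∣ (g2:ℤ) := dvd_trans (Int.natCast_dvd_natCast.2 hpd) ((Int.gcd_dvd_right _ _))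
      first
      | exact dvd_trans hp2 (Int.gcd_dvd_left _ _)
      | { have hp3 : (p:ℤ) ∣ (g3:ℤ) := dvd_trans hp2 (Int.gcd_dvd_right _ _)
          first
          | exact dvd_trans hp3 (Int.gcd_dvd_left _ _)
          | { have hp4 : (p:ℤ) ∣ (g4:ℤ) := dvd_trans hp3 (Int.gcd_dvd_right _ _)
              first
              | exact dvd_trans hp4 (Int.gcd_dvd_left _ _)
              | { have hp5 : (p:ℤ) ∣ (g5:ℤ) := dvd_trans hp4 (Int.gcd_dvd_right _ _)
                  first
                  | exact dvd_trans hp5 (Int.gcd_dvd_left _ _)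
                  | exact dvd_trans hp5 (Int.gcd_dvd_right _ _) } } } }
  have b1 : (g1 : ℤ) = dM * Int.gcdA dM (g2:ℤ) + (g2:ℤ) * Int.gcdB dM (g2:ℤ) := Int.gcd_eq_gcd_ab _ _
  have b2 : (g2 : ℤ) = dN * Int.gcdA dN (g3:ℤ) + (g3:ℤ) * Int.gcdB dN (g3:ℤ) := Int.gcd_eq_gcd_ab _ _
  have b3 : (g3 : ℤ) = d00 * Int.gcdA d00 (g4:ℤ) + (g4:ℤ) * Int.gcdB d00 (g4:ℤ) := Int.gcd_eq_gcd_ab _ _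
  have b4 : (g4 : ℤ) = d01 * Int.gcdA d01 (g5:ℤ) + (g5:ℤ) * Int.gcdB d01 (g5:ℤ) := Int.gcd_eq_gcd_ab _ _
  have b5 : (g5 : ℤ) = d10 * Int.gcdA d10 d11 + d11 * Int.gcdB d10 d11 := Int.gcd_eq_gcd_ab _ _
  rw [hgone] at b1
  refine ⟨Int.gcdA dM (g2:ℤ),
    Int.gcdB dM (g2:ℤ) * Int.gcdA dN (g3:ℤ),
    Int.gcdB dM (g2:ℤ) * Int.gcdB dN (g3:ℤ) * Int.gcdA d00 (g4:ℤ),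
    Int.gcdB dM (g2:ℤ) * Int.gcdB dN (g3:ℤ) * Int.gcdB d00 (g4:ℤ) * Int.gcdA d01 (g5:ℤ),
    Int.gcdB dM (g2:ℤ) * Int.gcdB dN (g3:ℤ) * Int.gcdB d00 (g4:ℤ) * Int.gcdB d01 (g5:ℤ) * Int.gcdA d10 d11,
    Int.gcdB dM (g2:ℤ) * Int.gcdB dN (g3:ℤ) * Int.gcdB d00 (g4:ℤ) * Int.gcdB d01 (g5:ℤ) * Int.gcdB d10 d11,
    ?_⟩
  push_cast at b1
  linear_combination -b1 - Int.gcdB dM (g2:ℤ) * b2 - Int.gcdB dM (g2:ℤ) * Int.gcdB dN (g3:ℤ) * b3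
    - Int.gcdB dM (g2:ℤ) * Int.gcdB dN (g3:ℤ) * Int.gcdB d00 (g4:ℤ) * b4
    - Int.gcdB dM (g2:ℤ) * Int.gcdB dN (g3:ℤ) * Int.gcdB d00 (g4:ℤ) * Int.gcdB d01 (g5:ℤ) * b5

/-- Any product difference `P Qᵀ - Q Pᵀ` of 2×2 matrices is antisymmetric. -/
lemma aux_antisym (P Q : Matrix (Fin 2) (Fin 2) ℤ) :
    P * Qᵀ - Q * Pᵀ
      = !![0, (P * Qᵀ - Q * Pᵀ) 0 1; -((P * Qᵀ - Q * Pᵀ) 0 1), 0] := by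
  ext i j
  fin_cases i <;> fin_cases j <;>
    simp [Matrix.sub_apply, Matrix.mul_apply, Fin.sum_univ_two, Matrix.transpose_apply] <;>
    ring

lemma aux_corr (k : ℤ) :
    !![0, k; -k, 0] + (!![0, k; 0, 0])ᵀ - !![0, k; 0, 0] = (0 : Matrix (Fin 2) (Fin 2) ℤ) := by
  have h : (!![0, k; 0, 0])ᵀ = !![0, 0; k, 0] := by
    ext i j
    fin_cases i <;> fin_cases j <;> rfl
  rw [h]
  ext i j
  fin_cases i <;> fin_cases j <;> simp

/-- Given a symmetric coprime pair, produce `A B` with `A Nᵀ - B Mᵀ = 1` and `A Bᵀ = B Aᵀ`. -/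
lemma aux_complete (M N : Matrix (Fin 2) (Fin 2) ℤ)
    (hsym : M * Nᵀ = N * Mᵀ)
    (hcop : ∀ p : ℕ, p.Prime → (concatMod p M N).rank = 2) :
    ∃ A B : Matrix (Fin 2) (Fin 2) ℤ,
      A * Nᵀ - B * Mᵀ = 1 ∧ A * Bᵀ = B * Aᵀ := by
  obtain ⟨cM, cN, e00, e01, e10, e11, hbez⟩ := aux_bezout M N hcop
  set A₀ : Matrix (Fin 2) (Fin 2) ℤ :=
    !![cN * N 1 1 - e00 * M 1 0 - e10 * M 1 1, -(cN * N 1 0) - e01 * M 1 0 - e11 * M 1 1;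
       -(cN * N 0 1) + e00 * M 0 0 + e10 * M 0 1, cN * N 0 0 + e01 * M 0 0 + e11 * M 0 1]
    with hA₀
  set B₀ : Matrix (Fin 2) (Fin 2) ℤ :=
    !![-(cM * M 1 1) - e00 * N 1 0 - e01 * N 1 1, cM * M 1 0 - e10 * N 1 0 - e11 * N 1 1;
       cM * M 0 1 + e00 * N 0 0 + e01 * N 0 1, -(cM * M 0 0) + e10 * N 0 0 + e11 * N 0 1]
    with hB₀
  have hAB : A₀ * Nᵀ - B₀ * Mᵀ = 1 := by
    ext i j
    fin_cases i <;> fin_cases j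
    all_goals
      simp only [hA₀, hB₀, Matrix.sub_apply, Matrix.mul_apply, Fin.sum_univ_two,
        Matrix.transpose_apply, Matrix.one_apply, Fin.mk_zero, Fin.mk_one, Fin.isValue,
        Matrix.cons_val', Matrix.cons_val_zero, Matrix.cons_val_one, Matrix.head_cons,
        Matrix.head_fin_const, Matrix.empty_val', Matrix.cons_val_fin_one, Matrix.of_apply]
    all_goals
      norm_num
    all_goals
      first
        | linear_combination hbez
        | ring1
  clear hbez hA₀ hB₀
  have hAB' : N * A₀ᵀ - M * B₀ᵀ = 1 := by
    have h := congrArg Matrix.transpose hAB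
    simpa [Matrix.transpose_sub, Matrix.transpose_mul] using h
  have hMN : M * Nᵀ - N * Mᵀ = 0 := by rw [hsym, sub_self]
  set k : ℤ := (A₀ * B₀ᵀ - B₀ * A₀ᵀ) 0 1 with hk
  set X : Matrix (Fin 2) (Fin 2) ℤ := !![0, k; 0, 0] with hX
  have hK : A₀ * B₀ᵀ - B₀ * A₀ᵀ = !![0, k; -k, 0] := aux_antisym A₀ B₀
  refine ⟨A₀ + X * M, B₀ + X * N, ?_, ?_⟩
  · have expand : (A₀ + X * M) * Nᵀ - (B₀ + X * N) * Mᵀ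
        = (A₀ * Nᵀ - B₀ * Mᵀ) + X * (M * Nᵀ - N * Mᵀ) := by noncomm_ring
    rw [expand, hAB, hMN, Matrix.mul_zero, add_zero]
  · have expand : (A₀ + X * M) * (B₀ + X * N)ᵀ - (B₀ + X * N) * (A₀ + X * M)ᵀ
        = (A₀ * B₀ᵀ - B₀ * A₀ᵀ) + (A₀ * Nᵀ - B₀ * Mᵀ) * Xᵀ - X * (N * A₀ᵀ - M * B₀ᵀ)
          + X * ((M * Nᵀ - N * Mᵀ) * Xᵀ) := by
      simp only [Matrix.transpose_add, Matrix.transpose_mul]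
      noncomm_ring
    have hzero : (A₀ + X * M) * (B₀ + X * N)ᵀ - (B₀ + X * N) * (A₀ + X * M)ᵀ = 0 := by
      rw [expand, hK, hAB, hAB', hMN, Matrix.one_mul, Matrix.mul_one, Matrix.zero_mul,
        Matrix.mul_zero, add_zero, hX]
      exact aux_corr k
    exact sub_eq_zero.mp hzero

/-- `J * J = -1`. -/
lemma aux_JJ : Jmat * Jmat = -1 := by
  rw [Jmat, Matrix.fromBlocks_multiply]
  have h1 : (-1 : Matrix (Fin 2 ⊕ Fin 2) (Fin 2 ⊕ Fin 2) ℤ)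
      = Matrix.fromBlocks (-1) (-0) (-0) (-1) := by
    rw [← Matrix.fromBlocks_neg, Matrix.fromBlocks_one]
  rw [h1]
  simp

/-- If `γ * J * γᵀ = J` then `γᵀ * J * γ = J`. -/
lemma aux_flip (γ : Matrix (Fin 2 ⊕ Fin 2) (Fin 2 ⊕ Fin 2) ℤ)
    (h : γ * Jmat * γᵀ = Jmat) : IsSp4 γ := by
  have hJJ := aux_JJ
  have e1 : γ * Jmat * γᵀ * Jmat = -1 := by rw [h, hJJ]
  have e2 : γ * (-(Jmat * γᵀ * Jmat)) = 1 := by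
    calc γ * (-(Jmat * γᵀ * Jmat)) = -(γ * Jmat * γᵀ * Jmat) := by noncomm_ring
    _ = 1 := by rw [e1, neg_neg]
  have e3 : (-(Jmat * γᵀ * Jmat)) * γ = 1 := mul_eq_one_comm.mp e2
  have e4 : Jmat * (γᵀ * Jmat * γ) = Jmat * Jmat := by
    calc Jmat * (γᵀ * Jmat * γ) = -((-(Jmat * γᵀ * Jmat)) * γ) := by noncomm_ring
    _ = -1 := by rw [e3]
    _ = Jmat * Jmat := by rw [hJJ]
  have hL : (-Jmat) * Jmat = 1 := by rw [neg_mul, hJJ, neg_neg]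
  show γᵀ * Jmat * γ = Jmat
  calc γᵀ * Jmat * γ = ((-Jmat) * Jmat) * (γᵀ * Jmat * γ) := by rw [hL, one_mul]
  _ = (-Jmat) * (Jmat * (γᵀ * Jmat * γ)) := by rw [mul_assoc]
  _ = (-Jmat) * (Jmat * Jmat) := by rw [e4]
  _ = ((-Jmat) * Jmat) * Jmat := by rw [mul_assoc]
  _ = Jmat := by rw [hL, one_mul]

theorem stmt11 (M N : Matrix (Fin 2) (Fin 2) ℤ)
    (hsym : M * Nᵀ = N * Mᵀ)
    (hcop : ∀ p : ℕ, p.Prime → (concatMod p M N).rank = 2) :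
    ∃ A B : Matrix (Fin 2) (Fin 2) ℤ, IsSp4 (Matrix.fromBlocks A B M N) := by
  obtain ⟨A, B, h1, h2⟩ := aux_complete M N hsym hcop
  have h1' : N * Aᵀ - M * Bᵀ = 1 := by
    have h := congrArg Matrix.transpose h1
    simpa [Matrix.transpose_sub, Matrix.transpose_mul] using h
  refine ⟨A, B, aux_flip _ ?_⟩
  rw [Jmat, Matrix.fromBlocks_transpose, Matrix.fromBlocks_multiply, Matrix.fromBlocks_multiply]
  rw [Matrix.fromBlocks_inj]
  refine ⟨?_, ?_, ?_, ?_⟩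
  · have e : (A * 0 + B * (-1)) * Aᵀ + (A * 1 + B * 0) * Bᵀ = A * Bᵀ - B * Aᵀ := by noncomm_ring
    rw [e, h2, sub_self]
  · have e : (A * 0 + B * (-1)) * Mᵀ + (A * 1 + B * 0) * Nᵀ = A * Nᵀ - B * Mᵀ := by noncomm_ring
    rw [e, h1]
  · have e : (M * 0 + N * (-1)) * Aᵀ + (M * 1 + N * 0) * Bᵀ = -(N * Aᵀ - M * Bᵀ) := by noncomm_ring
    rw [e, h1']
  · have e : (M * 0 + N * (-1)) * Mᵀ + (M * 1 + N * 0) * Nᵀ = M * Nᵀ - N * Mᵀ := by noncomm_ring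
    rw [e, hsym, sub_self]
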